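/- Let B be a normed space, u ∈ B a unit vector, and g₁,…,g_T ∈ B* with ‖gₜ‖_* ≤ 1. Then sup over v with ‖v‖ ≤ 1/2 of Σₜ ln(1 - ⟨gₜ, v⟩) is at least (1/4)·⟨Σₜ gₜ, u⟩² / (Σₜ ⟨gₜ, u⟩² + |⟨Σₜ gₜ, u⟩|). -/

import Mathlib

open Real

lemma log_ge_sub_sq {x : ℝ} (hx : |x| ≤ 1/2) : x - x^2 ≤ Real.log (1+x) := by
  rcases abs_le.1 hx with ⟨h1, h2⟩
  rcases le_or_gt 0 x with hx0 | hx0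
  · have hpos : 0 < 1 + x := by linarith
    have := Real.one_sub_inv_le_log_of_pos hpos
    have hinv : 1 - (1+x)⁻¹ = x / (1+x) := by field_simp; ring
    rw [hinv] at this
    have : x - x^2 ≤ x / (1+x) := by
      rw [le_div_iff₀ hpos]; nlinarith
    linarith
  · -- x ∈ [-1/2, 0): use antitone of f on [-1/2,0]
    set f : ℝ → ℝ := fun y => Real.log (1+y) - y + y^2 with hf
    have hderiv : ∀ y ∈ Set.Ioo (-(1/2) : ℝ) 0, HasDerivAt f ((1+y)⁻¹ - 1 + 2*y) y := by
      intro y hy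
      have hy1 : (1:ℝ) + y ≠ 0 := by rcases hy with ⟨a,b⟩; intro h; linarith [a]
      have h1 : HasDerivAt (fun y : ℝ => 1 + y) 1 y := by
        simpa using (hasDerivAt_id y).const_add 1
      have h2 : HasDerivAt (fun y : ℝ => Real.log (1+y)) ((1+y)⁻¹ * 1) y :=
        (Real.hasDerivAt_log hy1).comp y h1
      have h3 : HasDerivAt (fun y : ℝ => y^2) (2*y) y := by
        simpa using hasDerivAt_pow 2 y
      have h4 := (h2.sub (hasDerivAt_id y)).add h3
      rw [mul_one] at h4
      exact h4
    have hcont : ContinuousOn f (Set.Icc (-(1/2) : ℝ) 0) := by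
      apply ContinuousOn.add
      apply ContinuousOn.sub
      · apply ContinuousOn.log
        · exact (continuous_const.add continuous_id).continuousOn
        · intro y hy; rcases hy with ⟨a,b⟩; intro h; linarith
      · exact continuousOn_id
      · exact (continuous_pow 2).continuousOn
    have hanti : AntitoneOn f (Set.Icc (-(1/2) : ℝ) 0) := by
      apply antitoneOn_of_deriv_nonpos (convex_Icc _ _) hcont
      · intro y hy
        rw [interior_Icc] at hy
        exact ((hderiv y hy).differentiableAt).differentiableWithinAt
      · intro y hy
        rw [interior_Icc] at hy
        rw [((hderiv y hy).deriv)]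
        rcases hy with ⟨a, b⟩
        have hy1 : (0:ℝ) < 1 + y := by linarith
        rw [sub_add, sub_nonpos]
        have : (1+y)⁻¹ ≤ 1 - 2*y := by
          rw [inv_le_iff_one_le_mul₀ hy1]; nlinarith
        linarith
    have hx' : x ∈ Set.Icc (-(1/2):ℝ) 0 := ⟨by linarith, hx0.le⟩
    have h0 : (0:ℝ) ∈ Set.Icc (-(1/2):ℝ) 0 := ⟨by norm_num, le_rfl⟩
    have := hanti hx' h0 hx0.le
    simp only [hf] at this
    simp at this
    linarith
theorem banach_wealth_lower_bound {B : Type*} [NormedAddCommGroup B]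
    [NormedSpace ℝ B] (u : B) (hu : ‖u‖ = 1) (T : ℕ)
    (g : Fin T → StrongDual ℝ B) (hg : ∀ t, ‖g t‖ ≤ 1) :
    sSup {y : ℝ | ∃ v : B, ‖v‖ ≤ 1 / 2 ∧ y = ∑ t, Real.log (1 - g t v)} ≥
      (1 / 4) * (∑ t, g t u) ^ 2 /
        ((∑ t, (g t u) ^ 2) + |∑ t, g t u|) := by
  set L := {y : ℝ | ∃ v : B, ‖v‖ ≤ 1 / 2 ∧ y = ∑ t, Real.log (1 - g t v)} with hL
  -- bound on functionals applied to vectors of norm ≤ 1/2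
  have hbnd : ∀ (t : Fin T) (v : B), ‖v‖ ≤ 1/2 → |g t v| ≤ 1/2 := by
    intro t v hv
    calc |g t v| ≤ ‖g t‖ * ‖v‖ := (g t).le_opNorm v
    _ ≤ 1 * (1/2) := by
        apply mul_le_mul (hg t) hv (norm_nonneg v) zero_le_one
    _ = 1/2 := by norm_num
  have hbdd : BddAbove L := by
    refine ⟨(T : ℝ) * (1/2), ?_⟩
    rintro y ⟨v, hv, rfl⟩
    calc ∑ t, Real.log (1 - g t v) ≤ ∑ t : Fin T, (1/2 : ℝ) := by
          apply Finset.sum_le_sum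
          intro t _
          have h1 := hbnd t v hv
          have h2 : (0:ℝ) < 1 - g t v := by
            have := abs_le.1 h1; linarith [this.2]
          calc Real.log (1 - g t v) ≤ (1 - g t v) - 1 := Real.log_le_sub_one_of_pos h2
          _ = -(g t v) := by ring
          _ ≤ 1/2 := by have := abs_le.1 h1; linarith [this.1]
    _ = (T : ℝ) * (1/2) := by simp [Finset.sum_const, mul_comm]
  set S := ∑ t, g t u with hS
  set Q := ∑ t, (g t u)^2 with hQdef
  have hQ : 0 ≤ Q := Finset.sum_nonneg fun t _ => sq_nonneg _
  by_cases hS0 : S = 0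
  · have h0 : (0:ℝ) ∈ L := ⟨0, by simp⟩
    have := le_csSup hbdd h0
    rw [hS0]
    simpa using this
  · have hSabs : 0 < |S| := abs_pos.2 hS0
    set D := Q + |S| with hD
    have hDpos : 0 < D := by positivity
    set c := S / (2 * D) with hc
    have hcabs : |c| ≤ 1/2 := by
      rw [hc, abs_div]
      rw [div_le_iff₀ (by positivity : (0:ℝ) < |2 * D|)]
      rw [abs_of_pos (by positivity : (0:ℝ) < 2 * D)]
      have : |S| ≤ D := by rw [hD]; linarith
      linarith
    set v : B := (-c) • u with hv
    have hvnorm : ‖v‖ ≤ 1/2 := by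
      rw [hv, norm_smul, hu, mul_one, norm_neg, Real.norm_eq_abs]
      exact hcabs
    have hgu : ∀ t, |g t u| ≤ 1 := by
      intro t
      calc |g t u| ≤ ‖g t‖ * ‖u‖ := (g t).le_opNorm u
      _ ≤ 1 := by rw [hu, mul_one]; exact hg t
    have hterm : ∀ t : Fin T, c * g t u - (c * g t u)^2 ≤ Real.log (1 - g t v) := by
      intro t
      have hx : |c * g t u| ≤ 1/2 := by
        rw [abs_mul]
        calc |c| * |g t u| ≤ (1/2) * 1 :=
          mul_le_mul hcabs (hgu t) (abs_nonneg _) (by norm_num)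
        _ = 1/2 := by norm_num
      have := log_ge_sub_sq hx
      have heq : 1 - g t v = 1 + c * g t u := by
        rw [hv, map_smul, smul_eq_mul]; ring
      rw [heq]
      exact this
    have hy : c * S - c^2 * Q ≤ ∑ t, Real.log (1 - g t v) := by
      calc c * S - c^2 * Q = ∑ t, (c * g t u - (c * g t u)^2) := by
            rw [hS, hQdef, Finset.mul_sum, Finset.mul_sum, ← Finset.sum_sub_distrib]
            apply Finset.sum_congr rfl
            intro t _; ring
      _ ≤ ∑ t, Real.log (1 - g t v) := Finset.sum_le_sum fun t _ => hterm t
    have hfinal : (1/4) * S^2 / D ≤ c * S - c^2 * Q := by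
      have hDQ : D - Q = |S| := by rw [hD]; ring
      have key : c * S - c^2 * Q - (1/4) * S^2 / D
          = S^2 * (D - Q) / (4 * D^2) := by
        rw [hc]; field_simp; ring
      have hnn : 0 ≤ S^2 * (D - Q) / (4 * D^2) := by
        rw [hDQ]; positivity
      linarith [key, hnn]
    have hmem : (∑ t, Real.log (1 - g t v)) ∈ L := ⟨v, hvnorm, rfl⟩
    have := le_csSup hbdd hmem
    calc (1/4) * S^2 / D ≤ c * S - c^2 * Q := hfinal
    _ ≤ ∑ t, Real.log (1 - g t v) := hy
    _ ≤ sSup L := this
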